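/- Let K be a field and A = (α_{mn}) an M×N matrix with entries in T such that for all nonnegative integers U₁,…,U_N, V₁,…,V_M with U₁+⋯+U_N = V₁+⋯+V_M, the square matrix M_{U₁,…,U_N;V₁,…,V_M}(A) is nonsingular. Then A is strongly badly approximable. -/

import Mathlib

open scoped BigOperators Classical

noncomputable section

variable {K : Type*} [Field K]

/-- `x` as an element of `L = K((x⁻¹))`, realized as the Laurent series in `t = x⁻¹`
supported at the single exponent `-1`. -/
def xL (K : Type*) [Field K] : LaurentSeries K := HahnSeries.single (-1 : ℤ) 1

/-- The embedding of the polynomial ring `K[x]` into `L = K((x⁻¹))`. -/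
def toL (P : Polynomial K) : LaurentSeries K := Polynomial.aeval (xL K) P

/-- The absolute value on `L`: `|0| = 0` and `|F| = e^M` where `M` is the degree in `x`
of the leading term of `F` (i.e. `M = -(order of F as a series in t = x⁻¹)`). -/
def absL (F : LaurentSeries K) : ℝ := if F = 0 then 0 else Real.exp (-(F.order : ℝ))

/-- `‖F‖`, the distance from `F` to the nearest polynomial in `x`. -/
def normL (F : LaurentSeries K) : ℝ :=
  sInf { r : ℝ | ∃ P : Polynomial K, r = absL (F - toL P) }

/-- The solution space `V(U₁,…,U_N; V₁,…,V_M)` of the system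
`|ξ_n| < e^{U_n}` and `‖∑_n α_{mn} ξ_n‖ < e^{-V_m}`. -/
def VSet {M N : ℕ} (A : Matrix (Fin M) (Fin N) (LaurentSeries K))
    (U : Fin N → ℕ) (V : Fin M → ℕ) : Set (Fin N → Polynomial K) :=
  { ξ | (∀ n, absL (toL (ξ n)) < Real.exp (U n)) ∧
        (∀ m, normL (∑ n, A m n * toL (ξ n)) < Real.exp (-(V m : ℝ))) }

/-- `dim V(U₁,…,U_N; V₁,…,V_M)` as a `K`-vector space. -/
def dimV {M N : ℕ} (A : Matrix (Fin M) (Fin N) (LaurentSeries K))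
    (U : Fin N → ℕ) (V : Fin M → ℕ) : ℕ :=
  Module.finrank K (Submodule.span K (VSet A U V))

/-- An `M × N` matrix with entries in `T = L/K[x]` is strongly badly approximable if
there is `C₁ > 0` with `e^{-C₁} < (∏_m ‖∑_n α_{mn} ξ_n‖) (∏_n max(|ξ_n|,1))`
for all nonzero `ξ ∈ K[x]^N`. -/
def StronglyBadlyApproximable {M N : ℕ}
    (A : Matrix (Fin M) (Fin N) (LaurentSeries K)) : Prop :=
  ∃ C₁ : ℝ, 0 < C₁ ∧ ∀ ξ : Fin N → Polynomial K, ξ ≠ 0 →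
    Real.exp (-C₁) <
      (∏ m, normL (∑ n, A m n * toL (ξ n))) * (∏ n, max (absL (toL (ξ n))) 1)

/-- The `V × U` Hankel matrix `M_{U;V}(α)` with `(i,j)` entry `a_{i+j-1}` (1-indexed),
where `a_i` is the coefficient of `x^{-i}` in `α`. -/
def hankel (α : LaurentSeries K) (U V : ℕ) : Matrix (Fin V) (Fin U) K :=
  Matrix.of fun i j => α.coeff ((i : ℤ) + (j : ℤ) + 1)

/-- The block matrix `M_{U₁,…,U_N; V₁,…,V_M}(A)` whose `(m,n)` block is
`M_{U_n; V_m}(α_{mn})`. -/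
def blockM {M N : ℕ} (A : Matrix (Fin M) (Fin N) (LaurentSeries K))
    (U : Fin N → ℕ) (V : Fin M → ℕ) :
    Matrix ((m : Fin M) × Fin (V m)) ((n : Fin N) × Fin (U n)) K :=
  Matrix.of fun i j => hankel (A i.1 j.1) (U j.1) (V i.1) i.2 j.2

lemma toL_monomial (n : ℕ) (a : K) :
    toL (Polynomial.monomial n a) = HahnSeries.single (-(n : ℤ)) a := by
  unfold toL xL
  have hC : (algebraMap K (LaurentSeries K)) a = HahnSeries.single (0 : ℤ) a := by
    rw [HahnSeries.algebraMap_apply', PowerSeries.algebraMap_apply, HahnSeries.ofPowerSeries_C,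
      HahnSeries.C_apply, Algebra.algebraMap_self, RingHom.id_apply]
  rw [Polynomial.aeval_monomial, HahnSeries.single_pow, hC, HahnSeries.single_mul_single]
  simp

lemma toL_coeff (P : Polynomial K) (k : ℤ) :
    (toL P).coeff k = if k ≤ 0 then P.coeff (-k).toNat else 0 := by
  induction P using Polynomial.induction_on' with
  | add p q hp hq =>
      rw [toL, map_add, ← toL, ← toL, HahnSeries.coeff_add, hp, hq]
      split <;> simp
  | monomial n a =>
      rw [toL_monomial, HahnSeries.coeff_single, Polynomial.coeff_monomial]
      by_cases h : k = -(n : ℤ)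
      · subst h; simp
      · rw [if_neg h]
        split
        · rw [if_neg]; omega
        · rfl

lemma toL_coeff_neg (P : Polynomial K) (d : ℕ) : (toL P).coeff (-(d : ℤ)) = P.coeff d := by
  rw [toL_coeff, if_pos (by omega)]
  norm_num

lemma toL_coeff_pos (P : Polynomial K) {k : ℤ} (hk : 0 < k) : (toL P).coeff k = 0 := by
  rw [toL_coeff, if_neg (by omega)]

lemma toL_ne_zero {P : Polynomial K} (hP : P ≠ 0) : toL P ≠ 0 := by
  intro h
  have h1 := toL_coeff_neg P P.natDegree
  rw [h] at h1
  exact Polynomial.leadingCoeff_ne_zero.mpr hP h1.symm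

lemma order_toL {P : Polynomial K} (hP : P ≠ 0) : (toL P).order = -(P.natDegree : ℤ) := by
  have h1 : (toL P).coeff (-(P.natDegree : ℤ)) ≠ 0 := by
    rw [toL_coeff_neg]; exact Polynomial.leadingCoeff_ne_zero.mpr hP
  refine le_antisymm (HahnSeries.order_le_of_coeff_ne_zero h1) ?_
  by_contra hlt
  push_neg at hlt
  have h3 := mt HahnSeries.coeff_order_eq_zero.mp (toL_ne_zero hP)
  rw [toL_coeff, if_pos (by omega)] at h3
  have h4 := Polynomial.le_natDegree_of_ne_zero h3
  omega

lemma absL_nonneg (F : LaurentSeries K) : 0 ≤ absL F := by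
  unfold absL; split
  · exact le_rfl
  · exact (Real.exp_pos _).le

lemma normL_bddBelow (F : LaurentSeries K) :
    BddBelow { r : ℝ | ∃ P : Polynomial K, r = absL (F - toL P) } :=
  ⟨0, by rintro r ⟨Q, rfl⟩; exact absL_nonneg _⟩

lemma normL_le_absL (F : LaurentSeries K) (P : Polynomial K) :
    normL F ≤ absL (F - toL P) :=
  csInf_le (normL_bddBelow F) ⟨P, rfl⟩

lemma normL_nonneg (F : LaurentSeries K) : 0 ≤ normL F :=
  le_csInf ⟨absL (F - toL 0), 0, rfl⟩ (by rintro r ⟨P, rfl⟩; exact absL_nonneg _)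

lemma le_normL {F : LaurentSeries K} {k : ℤ} (hk1 : 1 ≤ k) (hk : F.coeff k ≠ 0) :
    Real.exp (-(k : ℝ)) ≤ normL F := by
  refine le_csInf ⟨absL (F - toL 0), 0, rfl⟩ ?_
  rintro r ⟨P, rfl⟩
  have hc : (F - toL P).coeff k ≠ 0 := by
    rw [HahnSeries.coeff_sub, toL_coeff, if_neg (by omega), sub_zero]
    exact hk
  have hne : F - toL P ≠ 0 := fun h => hc (by simp [h])
  have hord : (F - toL P).order ≤ k := HahnSeries.order_le_of_coeff_ne_zero hc
  rw [absL, if_neg hne]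
  apply Real.exp_le_exp.mpr
  simp only [neg_le_neg_iff]
  exact_mod_cast hord

lemma coeff_finsetSum {ι : Type*} (s : Finset ι) (f : ι → LaurentSeries K) (k : ℤ) :
    (∑ i ∈ s, f i).coeff k = ∑ i ∈ s, (f i).coeff k :=
  map_sum (HahnSeries.coeff.addMonoidHom k) f s

lemma normL_lt {F : LaurentSeries K} {V : ℕ}
    (hF : ∀ i : ℤ, 1 ≤ i → i ≤ (V : ℤ) → F.coeff i = 0) :
    normL F < Real.exp (-(V : ℝ)) := by
  by_cases hF0 : F = 0
  · refine lt_of_le_of_lt (normL_le_absL F 0) ?_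
    have h0 : toL (0 : Polynomial K) = 0 := map_zero (Polynomial.aeval (xL K))
    simp [hF0, h0, absL, Real.exp_pos]
  -- construct the polynomial part of F
  have hfin : (F.support ∩ Set.Iic (0 : ℤ)).Finite := by
    refine (Set.finite_Icc F.order 0).subset ?_
    rintro i ⟨hi1, hi2⟩
    exact ⟨HahnSeries.order_le_of_coeff_ne_zero hi1, hi2⟩
  set P : Polynomial K := ∑ i ∈ hfin.toFinset, Polynomial.monomial (-i).toNat (F.coeff i) with hP
  have hPc : ∀ k : ℤ, k ≤ 0 → (toL P).coeff k = F.coeff k := by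
    intro k hk
    rw [hP, toL, map_sum]
    have : ∀ i ∈ hfin.toFinset,
        (Polynomial.aeval (xL K) (Polynomial.monomial (-i).toNat (F.coeff i))).coeff k
          = if k = i then F.coeff i else 0 := by
      intro i hi
      have hi0 : i ≤ 0 := (hfin.mem_toFinset.mp hi).2
      rw [← toL, toL_monomial, HahnSeries.coeff_single]
      congr 1
      simp only [eq_iff_iff]
      omega
    rw [coeff_finsetSum, Finset.sum_congr rfl this, Finset.sum_ite_eq]
    by_cases hk2 : k ∈ hfin.toFinset
    · simp [hk2]
    · rw [if_neg hk2]
      have : F.coeff k = 0 := by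
        by_contra hc
        exact hk2 (hfin.mem_toFinset.mpr ⟨hc, hk⟩)
      rw [this]
  set G := F - toL P with hG
  have hGc : ∀ k : ℤ, k ≤ (V : ℤ) → G.coeff k = 0 := by
    intro k hk
    rw [hG, HahnSeries.coeff_sub]
    rcases le_or_gt k 0 with h0 | h0
    · rw [hPc k h0, sub_self]
    · rw [toL_coeff, if_neg (by omega), sub_zero]
      exact hF k (by omega) hk
  refine lt_of_le_of_lt (normL_le_absL F P) ?_
  by_cases hG0 : G = 0
  · rw [← hG, hG0]
    simp [absL, Real.exp_pos]
  · rw [← hG, absL, if_neg hG0]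
    apply Real.exp_lt_exp.mpr
    have : (V : ℤ) < G.order := by
      by_contra hc
      push_neg at hc
      exact mt HahnSeries.coeff_order_eq_zero.mp hG0 (hGc _ hc)
    have : (V : ℝ) < (G.order : ℝ) := by exact_mod_cast this
    linarith

lemma toL_eq_sum {P : Polynomial K} {U : ℕ} (hU : ∀ j, U ≤ j → P.coeff j = 0) :
    toL P = ∑ j : Fin U, HahnSeries.single (-(j : ℤ)) (P.coeff j) := by
  ext k
  rw [coeff_finsetSum, toL_coeff]
  have hs : ∀ j : Fin U, (HahnSeries.single (-(j : ℤ)) (P.coeff j)).coeff k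
      = if k = -(j : ℤ) then P.coeff j else 0 := fun j => by
    rw [HahnSeries.coeff_single]; convert rfl
  rw [Finset.sum_congr rfl fun j _ => hs j]
  by_cases hk : k ≤ 0
  · rw [if_pos hk]
    by_cases hkU : (-k).toNat < U
    · rw [Finset.sum_eq_single (⟨(-k).toNat, hkU⟩ : Fin U)]
      · rw [if_pos (by simp; omega)]
      · intro j _ hj
        rw [if_neg]
        intro hc
        apply hj
        apply Fin.ext
        simp only
        omega
      · intro hc
        exact absurd (Finset.mem_univ _) hc
    · rw [hU _ (by omega), Finset.sum_eq_zero]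
      intro j _
      rw [if_neg (by omega)]
  · rw [if_neg hk, Finset.sum_eq_zero]
    intro j _
    rw [if_neg (by omega)]

lemma mul_toL_coeff (α : LaurentSeries K) {P : Polynomial K} {U : ℕ}
    (hU : ∀ j, U ≤ j → P.coeff j = 0) (i : ℤ) :
    (α * toL P).coeff i = ∑ j : Fin U, α.coeff (i + (j : ℤ)) * P.coeff j := by
  rw [toL_eq_sum hU, Finset.mul_sum, coeff_finsetSum]
  refine Finset.sum_congr rfl fun j _ => ?_
  have hi : i = (i + (j : ℤ)) + (-(j : ℤ)) := by ring
  rw [hi, HahnSeries.coeff_mul_single_add]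
  ring_nf

lemma exists_le_sum {M : ℕ} (b : Fin M → ℕ) (S : ℕ) (hS : S ≤ ∑ m, b m) :
    ∃ V : Fin M → ℕ, (∀ m, V m ≤ b m) ∧ ∑ m, V m = S := by
  induction S with
  | zero => exact ⟨0, fun m => Nat.zero_le _, by simp⟩
  | succ S ih =>
    obtain ⟨V, hVb, hVS⟩ := ih (Nat.le_of_succ_le hS)
    have hex : ∃ m, V m < b m := by
      by_contra hc
      push_neg at hc
      have := Finset.sum_le_sum (fun m (_ : m ∈ Finset.univ) => hc m)
      omega
    obtain ⟨m₀, hm₀⟩ := hex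
    refine ⟨Function.update V m₀ (V m₀ + 1), fun m => ?_, ?_⟩
    · by_cases hm : m = m₀
      · subst hm; rw [Function.update_self]; omega
      · rw [Function.update_of_ne hm]; exact hVb m
    · rw [Finset.sum_update_of_mem (Finset.mem_univ m₀)]
      rw [← Finset.sum_compl_add_sum {m₀} V, Finset.sum_singleton] at hVS
      simp only [Finset.compl_eq_univ_sdiff] at hVS
      omega

lemma key {M N : ℕ} (A : Matrix (Fin M) (Fin N) (LaurentSeries K))
    (h : ∀ (U : Fin N → ℕ) (V : Fin M → ℕ), (∑ n, U n) = (∑ m, V m) →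
      (blockM A U V).rank = ∑ n, U n)
    (ξ : Fin N → Polynomial K) {n₀ : Fin N} (hn₀ : ξ n₀ ≠ 0)
    (U : Fin N → ℕ) (hUd : ∀ n j, U n ≤ j → (ξ n).coeff j = 0)
    (hUn₀ : (ξ n₀).natDegree < U n₀)
    (V : Fin M → ℕ) (hV : (∑ n, U n) = ∑ m, V m)
    (hcoeff : ∀ m, ∀ i : ℤ, 1 ≤ i → i ≤ (V m : ℤ) →
      (∑ n, A m n * toL (ξ n)).coeff i = 0) : False := by
  classical
  set B := blockM A U V with hB
  set c : ((n : Fin N) × Fin (U n)) → K := fun j => (ξ j.1).coeff j.2 with hc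
  have hmul : B.mulVec c = 0 := by
    funext i
    show ∑ j, B i j * c j = 0
    rw [← Finset.univ_sigma_univ, Finset.sum_sigma]
    have hstep : ∀ n : Fin N, ∑ j : Fin (U n), B i ⟨n, j⟩ * c ⟨n, j⟩
        = (A i.1 n * toL (ξ n)).coeff ((i.2 : ℤ) + 1) := by
      intro n
      rw [mul_toL_coeff (A i.1 n) (hUd n) ((i.2 : ℤ) + 1)]
      refine Finset.sum_congr rfl fun j _ => ?_
      show (A i.1 n).coeff ((i.2 : ℤ) + (j : ℤ) + 1) * (ξ n).coeff j = _
      congr 2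
      ring
    rw [Finset.sum_congr rfl fun n _ => hstep n, ← coeff_finsetSum]
    exact hcoeff i.1 _ (by omega) (by have := i.2.isLt; omega)
  have hcard : Module.finrank K (((n : Fin N) × Fin (U n)) → K) = ∑ n, U n := by
    rw [Module.finrank_pi, Fintype.card_sigma]
    simp
  have hrn := LinearMap.finrank_range_add_finrank_ker (Matrix.mulVecLin B)
  rw [hcard] at hrn
  have hrank := h U V hV
  rw [Matrix.rank, ← hB] at hrank
  have hker0 : Module.finrank K (LinearMap.ker (Matrix.mulVecLin B)) = 0 := by omega
  have hker : LinearMap.ker (Matrix.mulVecLin B) = ⊥ := Submodule.finrank_eq_zero.mp hker0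
  have hcmem : c ∈ LinearMap.ker (Matrix.mulVecLin B) := by
    rw [LinearMap.mem_ker, Matrix.mulVecLin_apply]
    exact hmul
  have hc0 : c = 0 := by
    rw [hker] at hcmem
    simpa using hcmem
  have : c ⟨n₀, ⟨(ξ n₀).natDegree, hUn₀⟩⟩ = 0 := by rw [hc0]; rfl
  exact Polynomial.leadingCoeff_ne_zero.mpr hn₀ this

/-- if every square matrix `M_{U₁,…,U_N;V₁,…,V_M}(A)` with
`U₁+⋯+U_N = V₁+⋯+V_M` is nonsingular (i.e. has full rank), then `A` is strongly badly
approximable. -/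
theorem sba_of_all_square_blocks_nonsingular {K : Type*} [Field K] {M N : ℕ}
    (A : Matrix (Fin M) (Fin N) (LaurentSeries K))
    (h : ∀ (U : Fin N → ℕ) (V : Fin M → ℕ), (∑ n, U n) = (∑ m, V m) →
      (blockM A U V).rank = ∑ n, U n) :
    StronglyBadlyApproximable A := by
  unfold StronglyBadlyApproximable
  classical
  refine ⟨(M : ℝ) + N + 1, by positivity, ?_⟩
  intro ξ hξ
  obtain ⟨n₀, hn₀⟩ : ∃ n, ξ n ≠ 0 := by
    by_contra hc; push_neg at hc; exact hξ (funext hc)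
  set U : Fin N → ℕ := fun n => if ξ n = 0 then 0 else (ξ n).natDegree + 1 with hU
  have hUd : ∀ n j, U n ≤ j → (ξ n).coeff j = 0 := by
    intro n j hj
    by_cases h0 : ξ n = 0
    · simp [h0]
    · apply Polynomial.coeff_eq_zero_of_natDegree_lt
      simp [hU, h0] at hj
      omega
  have hUn₀ : (ξ n₀).natDegree < U n₀ := by simp [hU, hn₀]
  set F : Fin M → LaurentSeries K := fun m => ∑ n, A m n * toL (ξ n) with hF
  have hex : ∀ m : Fin M, ∃ j : ℕ, (F m).coeff ((j : ℤ) + 1) ≠ 0 := by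
    intro m
    by_contra hc
    push_neg at hc
    refine key A h ξ hn₀ U hUd hUn₀ (Function.update (0 : Fin M → ℕ) m (∑ n, U n)) ?_ ?_
    · rw [Finset.sum_update_of_mem (Finset.mem_univ m)]
      simp
    · intro m' i hi1 hi2
      by_cases hm : m' = m
      · subst hm
        have hi : i = (((i - 1).toNat : ℕ) : ℤ) + 1 := by omega
        rw [hi]
        exact hc _
      · rw [Function.update_of_ne hm] at hi2
        simp only [Pi.zero_apply, Nat.cast_zero] at hi2
        omega
  set b : Fin M → ℕ := fun m => Nat.find (hex m) with hb
  have hbspec : ∀ m, (F m).coeff ((b m : ℤ) + 1) ≠ 0 := fun m => Nat.find_spec (hex m)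
  have hbmin : ∀ m, ∀ i : ℤ, 1 ≤ i → i ≤ (b m : ℤ) → (F m).coeff i = 0 := by
    intro m i h1 h2
    have hi : i = (((i - 1).toNat : ℕ) : ℤ) + 1 := by omega
    have hmin := Nat.find_min (hex m) (show (i - 1).toNat < b m by omega)
    rw [hi]
    exact not_not.mp hmin
  have hsum : ∑ m, b m + 1 ≤ ∑ n, U n := by
    by_contra hc
    push_neg at hc
    obtain ⟨V, hVb, hVS⟩ := exists_le_sum b (∑ n, U n) (by omega)
    exact key A h ξ hn₀ U hUd hUn₀ V hVS.symm
      (fun m i h1 h2 => hbmin m i h1 (by have := hVb m; omega))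
  set d : Fin N → ℕ := fun n => if ξ n = 0 then 0 else (ξ n).natDegree with hd
  have hUled : ∀ n, U n ≤ d n + 1 := by
    intro n
    by_cases h0 : ξ n = 0 <;> simp [hU, hd, h0]
  have hmax : ∀ n, max (absL (toL (ξ n))) 1 = Real.exp (d n) := by
    intro n
    by_cases h0 : ξ n = 0
    · have hz : toL (ξ n) = 0 := by rw [h0]; exact map_zero (Polynomial.aeval (xL K))
      rw [hz, absL, if_pos rfl]
      simp [hd, h0]
    · have hdn : d n = (ξ n).natDegree := by simp [hd, h0]
      rw [absL, if_neg (toL_ne_zero h0), order_toL h0, hdn, max_eq_left]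
      · push_cast
        ring_nf
      · rw [show (1 : ℝ) = Real.exp 0 from Real.exp_zero.symm]
        apply Real.exp_le_exp.mpr
        push_cast
        ring_nf
        positivity
  have hprod2 : ∏ n, max (absL (toL (ξ n))) 1 = Real.exp (∑ n, ((d n : ℝ))) := by
    rw [Real.exp_sum]
    exact Finset.prod_congr rfl fun n _ => hmax n
  have hprod1 : Real.exp (-∑ m, ((b m : ℝ) + 1)) ≤ ∏ m, normL (F m) := by
    rw [show -∑ m, ((b m : ℝ) + 1) = ∑ m, -((b m : ℝ) + 1) by rw [Finset.sum_neg_distrib],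
      Real.exp_sum]
    refine Finset.prod_le_prod (fun m _ => (Real.exp_pos _).le) (fun m _ => ?_)
    have hle := le_normL (F := F m) (k := (b m : ℤ) + 1) (by omega) (hbspec m)
    convert hle using 2
    · rfl
    push_cast
    ring
  have hA : Real.exp (-((M : ℝ) + N + 1))
      < Real.exp (-(∑ m, ((b m : ℝ) + 1)) + ∑ n, ((d n : ℝ))) := by
    apply Real.exp_lt_exp.mpr
    have h1 : ∑ m, b m + 1 ≤ ∑ n, d n + N := by
      have h2 : ∑ n, U n ≤ ∑ n, (d n + 1) :=
        Finset.sum_le_sum fun n _ => hUled n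
      rw [Finset.sum_add_distrib] at h2
      simp only [Finset.sum_const, Finset.card_univ, Fintype.card_fin, smul_eq_mul,
        mul_one] at h2
      omega
    have e1 : ∑ m, ((b m : ℝ) + 1) = ((∑ m, b m : ℕ) : ℝ) + M := by
      rw [Finset.sum_add_distrib]
      push_cast
      simp [Finset.card_univ]
    have e2 : ∑ n, ((d n : ℝ)) = ((∑ n, d n : ℕ) : ℝ) := by push_cast; rfl
    rw [e1, e2]
    have h3 : ((∑ m, b m : ℕ) : ℝ) + 1 ≤ ((∑ n, d n : ℕ) : ℝ) + N := by
      exact_mod_cast h1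
    linarith
  calc Real.exp (-((M : ℝ) + N + 1))
      < Real.exp (-(∑ m, ((b m : ℝ) + 1)) + ∑ n, ((d n : ℝ))) := hA
    _ = Real.exp (-∑ m, ((b m : ℝ) + 1)) * Real.exp (∑ n, ((d n : ℝ))) := Real.exp_add _ _
    _ ≤ (∏ m, normL (F m)) * ∏ n, max (absL (toL (ξ n))) 1 := by
        rw [hprod2]
        exact mul_le_mul_of_nonneg_right hprod1 (Real.exp_pos _).le
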